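/- arXiv:2306.08594 — 6 statements merged into one kernel-verified Lean document; each statement's English description precedes it below -/
import Mathlib

section
/- If a directed co-graph G with at least two vertices is strongly connected, then G is the join of two directed co-graphs, i.e., G = G1 × G2 where V(G) is partitioned into the vertex sets of two directed co-graphs G1 and G2 and E(G) contains, besides the edges of G1 and G2, all edges (u,v) and (v,u) with u ∈ V(G1), v ∈ V(G2). -/
universe u

/-- There is a directed walk of length `n` from `u` to `v` in the digraph
with edge relation `E`. -/
def HasWalkLen {V : Type u} (E : V → V → Prop) (u v : V) (n : ℕ) : Prop :=
  ∃ f : Fin (n + 1) → V, f 0 = u ∧ f (Fin.last n) = v ∧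
    ∀ i : Fin n, E (f i.castSucc) (f i.succ)

/-- `v` is reachable from `u` by a directed walk. -/
def Reaches {V : Type u} (E : V → V → Prop) (u v : V) : Prop :=
  ∃ n, HasWalkLen E u v n

/-- Directed distance from `u` to `v` (length of a shortest directed path);
a junk value (`sInf ∅ = 0`) if `v` is unreachable from `u`. -/
noncomputable def ddist {V : Type u} (E : V → V → Prop) (u v : V) : ℕ :=
  sInf {n | HasWalkLen E u v n}

/-- `w` resolves the vertices `u` and `v`: `w = u`, or `w = v`, or both
distances from `w` are defined (reachable) and different. -/
def Resolves {V : Type u} (E : V → V → Prop) (w u v : V) : Prop :=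
  w = u ∨ w = v ∨
    (Reaches E w u ∧ Reaches E w v ∧ ddist E w u ≠ ddist E w v)

/-- `R` resolves the vertex set `U`: every pair of distinct vertices of `U`
is resolved by some member of `R`. -/
def ResolvesSet {V : Type u} (E : V → V → Prop) (R U : Set V) : Prop :=
  ∀ u ∈ U, ∀ v ∈ U, u ≠ v → ∃ w ∈ R, Resolves E w u v

/-- The digraph is strongly connected on the vertex set `S`. -/
def SConn {V : Type u} (E : V → V → Prop) (S : Set V) : Prop :=
  ∀ u ∈ S, ∀ v ∈ S, Reaches E u v

/-- `u` is a 1-vertex w.r.t. `R`: `u ∉ R` and every `w ∈ R` has an edge to `u`. -/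
def OneVertex {V : Type u} (E : V → V → Prop) (R : Set V) (u : V) : Prop :=
  u ∉ R ∧ ∀ w ∈ R, E w u

/-- `u` is a 2-vertex w.r.t. `R`: `u ∉ R` and no `w ∈ R` has an edge to `u`. -/
def TwoVertex {V : Type u} (E : V → V → Prop) (R : Set V) (u : V) : Prop :=
  u ∉ R ∧ ∀ w ∈ R, ¬ E w u

/-- Directed co-graphs with vertex set `S` and edge relation `E`, built
inductively from single vertices by disjoint union, join and directed join. -/
inductive IsDicograph {V : Type u} : Set V → (V → V → Prop) → Prop
  | single (v : V) : IsDicograph {v} fun _ _ => False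
  | disjUnion {S₁ S₂ : Set V} {E₁ E₂ : V → V → Prop} :
      IsDicograph S₁ E₁ → IsDicograph S₂ E₂ → Disjoint S₁ S₂ →
      IsDicograph (S₁ ∪ S₂) fun u v => E₁ u v ∨ E₂ u v
  | join {S₁ S₂ : Set V} {E₁ E₂ : V → V → Prop} :
      IsDicograph S₁ E₁ → IsDicograph S₂ E₂ → Disjoint S₁ S₂ →
      IsDicograph (S₁ ∪ S₂) fun u v =>
        E₁ u v ∨ E₂ u v ∨ (u ∈ S₁ ∧ v ∈ S₂) ∨ (u ∈ S₂ ∧ v ∈ S₁)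
  | dirJoin {S₁ S₂ : Set V} {E₁ E₂ : V → V → Prop} :
      IsDicograph S₁ E₁ → IsDicograph S₂ E₂ → Disjoint S₁ S₂ →
      IsDicograph (S₁ ∪ S₂) fun u v => E₁ u v ∨ E₂ u v ∨ (u ∈ S₁ ∧ v ∈ S₂)

theorem dicog_nonempty {V : Type u} {S : Set V} {E : V → V → Prop}
    (h : IsDicograph S E) : S.Nonempty := by
  induction h with
  | single v => exact ⟨v, rfl⟩
  | disjUnion _ _ _ ih1 _ => exact ih1.mono Set.subset_union_left
  | join _ _ _ ih1 _ => exact ih1.mono Set.subset_union_left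
  | dirJoin _ _ _ ih1 _ => exact ih1.mono Set.subset_union_left

theorem dicog_edges_mem {V : Type u} {S : Set V} {E : V → V → Prop}
    (h : IsDicograph S E) : ∀ u v, E u v → u ∈ S ∧ v ∈ S := by
  induction h with
  | single v => intro u v h; exact h.elim
  | disjUnion _ _ _ ih1 ih2 =>
      rintro u v (h | h)
      · exact ⟨Or.inl (ih1 u v h).1, Or.inl (ih1 u v h).2⟩
      · exact ⟨Or.inr (ih2 u v h).1, Or.inr (ih2 u v h).2⟩
  | join _ _ _ ih1 ih2 =>
      rintro u v (h | h | ⟨h1, h2⟩ | ⟨h1, h2⟩)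
      · exact ⟨Or.inl (ih1 u v h).1, Or.inl (ih1 u v h).2⟩
      · exact ⟨Or.inr (ih2 u v h).1, Or.inr (ih2 u v h).2⟩
      · exact ⟨Or.inl h1, Or.inr h2⟩
      · exact ⟨Or.inr h1, Or.inl h2⟩
  | dirJoin _ _ _ ih1 ih2 =>
      rintro u v (h | h | ⟨h1, h2⟩)
      · exact ⟨Or.inl (ih1 u v h).1, Or.inl (ih1 u v h).2⟩
      · exact ⟨Or.inr (ih2 u v h).1, Or.inr (ih2 u v h).2⟩
      · exact ⟨Or.inl h1, Or.inr h2⟩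

theorem reaches_closed {V : Type u} {E : V → V → Prop} (P : V → Prop)
    (hP : ∀ x y, P x → E x y → P y) {u v : V}
    (h : Reaches E u v) (hu : P u) : P v := by
  obtain ⟨n, f, h0, hl, he⟩ := h
  have key : ∀ k (h : k < n + 1), P (f ⟨k, h⟩) := by
    intro k
    induction k with
    | zero => intro h; exact h0 ▸ hu
    | succ k ih =>
        intro h
        have hk : k < n := Nat.lt_of_succ_lt_succ h
        have := he ⟨k, hk⟩
        have hc : (⟨k, hk⟩ : Fin n).castSucc = ⟨k, by omega⟩ := rfl
        have hs : (⟨k, hk⟩ : Fin n).succ = ⟨k + 1, h⟩ := rfl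
        rw [hc, hs] at this
        exact hP _ _ (ih (by omega)) this
  have := key n (Nat.lt_succ_self n)
  rwa [show (⟨n, Nat.lt_succ_self n⟩ : Fin (n + 1)) = Fin.last n from rfl, hl] at this

/-- A strongly connected directed co-graph with at least two vertices is a join
of two directed co-graphs. -/
theorem stmt_0 {V : Type u} {S : Set V} {E : V → V → Prop}
    (hG : IsDicograph S E)
    (htwo : ∃ u ∈ S, ∃ v ∈ S, u ≠ v)
    (hsc : SConn E S) :
    ∃ (S₁ S₂ : Set V) (E₁ E₂ : V → V → Prop),
      IsDicograph S₁ E₁ ∧ IsDicograph S₂ E₂ ∧ Disjoint S₁ S₂ ∧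
      S = S₁ ∪ S₂ ∧
      ∀ u v, E u v ↔
        (E₁ u v ∨ E₂ u v ∨ (u ∈ S₁ ∧ v ∈ S₂) ∨ (u ∈ S₂ ∧ v ∈ S₁)) := by
  cases hG with
  | single v =>
      obtain ⟨u, hu, w, hw, hne⟩ := htwo
      exact absurd (hu.trans hw.symm) hne
  | @disjUnion S₁ S₂ E₁ E₂ h1 h2 hdisj =>
      exfalso
      obtain ⟨u, hu⟩ := dicog_nonempty h1
      obtain ⟨v, hv⟩ := dicog_nonempty h2
      have hr := hsc u (Or.inl hu) v (Or.inr hv)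
      have : v ∈ S₁ := by
        refine reaches_closed (· ∈ S₁) ?_ hr hu
        rintro x y hx (h | h)
        · exact (dicog_edges_mem h1 x y h).2
        · exact absurd ((dicog_edges_mem h2 x y h).1) (fun hy => hdisj.ne_of_mem hx hy rfl)
      exact hdisj.ne_of_mem this hv rfl
  | @join S₁ S₂ E₁ E₂ h1 h2 hdisj =>
      exact ⟨S₁, S₂, E₁, E₂, h1, h2, hdisj, rfl, fun u v => Iff.rfl⟩
  | @dirJoin S₁ S₂ E₁ E₂ h1 h2 hdisj =>
      exfalso
      obtain ⟨u, hu⟩ := dicog_nonempty h1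
      obtain ⟨v, hv⟩ := dicog_nonempty h2
      have hr := hsc v (Or.inr hv) u (Or.inl hu)
      have : u ∈ S₂ := by
        refine reaches_closed (· ∈ S₂) ?_ hr hv
        rintro x y hx (h | h | ⟨hx1, hy2⟩)
        · exact absurd ((dicog_edges_mem h1 x y h).1) (fun hy => hdisj.ne_of_mem hy hx rfl)
        · exact (dicog_edges_mem h2 x y h).2
        · exact hy2
      exact hdisj.ne_of_mem hu this rfl
end

section
/- Let G be a strongly connected directed graph in which all directed distances between distinct vertices are at most 2, and let R be a resolving set for G. Then there is at most one 1-vertex of G with respect to R, and at most one 2-vertex of G with respect to R. -/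
universe u

lemma walk_zero {V : Type u} {E : V → V → Prop} {u v : V} :
    HasWalkLen E u v 0 ↔ u = v := by
  constructor
  · rintro ⟨f, h0, hl, _⟩
    rw [← h0, ← hl]; rfl
  · rintro rfl
    exact ⟨fun _ => u, rfl, rfl, fun i => i.elim0⟩

lemma walk_one {V : Type u} {E : V → V → Prop} {u v : V} :
    HasWalkLen E u v 1 ↔ E u v := by
  constructor
  · rintro ⟨f, h0, hl, he⟩
    have := he 0
    rwa [show (0 : Fin 1).castSucc = 0 from rfl, show (0 : Fin 1).succ = Fin.last 1 from rfl,
      h0, hl] at this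
  · intro h
    exact ⟨![u, v], rfl, rfl, fun i => by fin_cases i <;> simpa⟩

lemma ddist_eq_one {V : Type u} {E : V → V → Prop} {u v : V} (hne : u ≠ v) (he : E u v) :
    ddist E u v = 1 := by
  have h1 : 1 ∈ {n | HasWalkLen E u v n} := walk_one.mpr he
  have hle : ddist E u v ≤ 1 := Nat.sInf_le h1
  have hmem : ddist E u v ∈ {n | HasWalkLen E u v n} := Nat.sInf_mem ⟨1, h1⟩
  interval_cases h : ddist E u v
  · exact absurd (walk_zero.mp hmem) hne
  · rfl

lemma ddist_eq_two {V : Type u} {E : V → V → Prop} {u v : V} (hne : u ≠ v) (hnE : ¬ E u v)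
    (hr : Reaches E u v) (hle : ddist E u v ≤ 2) : ddist E u v = 2 := by
  have hmem : ddist E u v ∈ {n | HasWalkLen E u v n} := Nat.sInf_mem hr
  interval_cases h : ddist E u v
  · exact absurd (walk_zero.mp hmem) hne
  · exact absurd (walk_one.mp hmem) hnE
  · rfl

/-- A resolving set of a strongly connected digraph of diameter at most 2
admits at most one 1-vertex and at most one 2-vertex. -/
theorem stmt_3 {V : Type u} {E : V → V → Prop}
    (hsc : SConn E Set.univ)
    (hdiam : ∀ u v : V, u ≠ v → ddist E u v ≤ 2)
    {R : Set V} (hR : ResolvesSet E R Set.univ) :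
    (∀ u v : V, OneVertex E R u → OneVertex E R v → u = v) ∧
    (∀ u v : V, TwoVertex E R u → TwoVertex E R v → u = v) := by
  constructor
  · intro u v hu hv
    by_contra hne
    obtain ⟨w, hwR, hres⟩ := hR u trivial v trivial hne
    rcases hres with rfl | rfl | ⟨_, _, hd⟩
    · exact hu.1 hwR
    · exact hv.1 hwR
    · have h1 : w ≠ u := fun h => hu.1 (h ▸ hwR)
      have h2 : w ≠ v := fun h => hv.1 (h ▸ hwR)
      exact hd ((ddist_eq_one h1 (hu.2 w hwR)).trans (ddist_eq_one h2 (hv.2 w hwR)).symm)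
  · intro u v hu hv
    by_contra hne
    obtain ⟨w, hwR, hres⟩ := hR u trivial v trivial hne
    rcases hres with rfl | rfl | ⟨hr1, hr2, hd⟩
    · exact hu.1 hwR
    · exact hv.1 hwR
    · have h1 : w ≠ u := fun h => hu.1 (h ▸ hwR)
      have h2 : w ≠ v := fun h => hv.1 (h ▸ hwR)
      exact hd ((ddist_eq_two h1 (hu.2 w hwR) hr1 (hdiam w u h1)).trans
        (ddist_eq_two h2 (hv.2 w hwR) hr2 (hdiam w v h2)).symm)
end

section
/- Let G be a strongly connected directed graph with all distances between distinct vertices at most 2, and let V1, V2 ⊆ V(G) be disjoint vertex sets with no edges of G between V1 and V2 in either direction. Let R1 ⊆ V1 and R2 ⊆ V2 be nonempty. If there exists a 2-vertex u1 ∈ V1 \ R1 w.r.t. R1 and a 2-vertex u2 ∈ V2 \ R2 w.r.t. R2, then R1 ∪ R2 does not resolve V1 ∪ V2 in G (the pair u1, u2 is unresolved). -/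
universe u

lemma ddist_eq_two_aux {V : Type u} {E : V → V → Prop}
    (hsc : SConn E Set.univ)
    (hdiam : ∀ u v : V, u ≠ v → ddist E u v ≤ 2)
    {u v : V} (hne : u ≠ v) (hnE : ¬ E u v) : ddist E u v = 2 := by
  have hreach : Reaches E u v := hsc u trivial v trivial
  have hne' : {n | HasWalkLen E u v n}.Nonempty := hreach
  have hmem := Nat.sInf_mem hne'
  have h0 : ddist E u v ≠ 0 := by
    intro h
    rw [ddist] at h
    rw [h] at hmem
    obtain ⟨f, hf0, hfl, _⟩ := hmem
    exact hne (hf0 ▸ hfl ▸ rfl)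
  have h1 : ddist E u v ≠ 1 := by
    intro h
    rw [ddist] at h
    rw [h] at hmem
    obtain ⟨f, hf0, hfl, he⟩ := hmem
    have := he 0
    have h0' : (Fin.castSucc (0 : Fin 1)) = (0 : Fin 2) := rfl
    have h1' : (Fin.succ (0 : Fin 1)) = Fin.last 1 := rfl
    rw [h0', h1', hf0, hfl] at this
    exact hnE this
  have h2 := hdiam u v hne
  omega

/-- Disjoint union case, negative direction: a 2-vertex on each side leaves
the pair unresolved. -/
theorem stmt_5 {V : Type u} {E : V → V → Prop}
    (hsc : SConn E Set.univ)
    (hdiam : ∀ u v : V, u ≠ v → ddist E u v ≤ 2)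
    {V₁ V₂ R₁ R₂ : Set V}
    (hdisj : Disjoint V₁ V₂)
    (hnoedge : ∀ x ∈ V₁, ∀ y ∈ V₂, ¬ E x y ∧ ¬ E y x)
    (hR₁ : R₁ ⊆ V₁) (hR₂ : R₂ ⊆ V₂)
    (hR₁ne : R₁.Nonempty) (hR₂ne : R₂.Nonempty)
    {u₁ u₂ : V} (hu₁ : u₁ ∈ V₁) (hu₁R : u₁ ∉ R₁) (h2v₁ : TwoVertex E R₁ u₁)
    (hu₂ : u₂ ∈ V₂) (hu₂R : u₂ ∉ R₂) (h2v₂ : TwoVertex E R₂ u₂) :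
    (∀ w ∈ R₁ ∪ R₂, ¬ Resolves E w u₁ u₂) ∧
    ¬ ResolvesSet E (R₁ ∪ R₂) (V₁ ∪ V₂) := by
  have hne12 : u₁ ≠ u₂ := fun h => hdisj.ne_of_mem hu₁ hu₂ h
  have key : ∀ w ∈ R₁ ∪ R₂, ¬ Resolves E w u₁ u₂ := by
    intro w hw hres
    rcases hw with hw | hw
    · have hwV₁ := hR₁ hw
      have hwu₁ : w ≠ u₁ := fun h => hu₁R (h ▸ hw)
      have hwu₂ : w ≠ u₂ := fun h => hdisj.ne_of_mem hwV₁ hu₂ h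
      have d1 : ddist E w u₁ = 2 :=
        ddist_eq_two_aux hsc hdiam hwu₁ (h2v₁.2 w hw)
      have d2 : ddist E w u₂ = 2 :=
        ddist_eq_two_aux hsc hdiam hwu₂ (hnoedge w hwV₁ u₂ hu₂).1
      rcases hres with h | h | ⟨_, _, h⟩
      · exact hwu₁ h
      · exact hwu₂ h
      · exact h (d1.trans d2.symm)
    · have hwV₂ := hR₂ hw
      have hwu₂ : w ≠ u₂ := fun h => hu₂R (h ▸ hw)
      have hwu₁ : w ≠ u₁ := fun h => hdisj.ne_of_mem hu₁ hwV₂ h.symm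
      have d1 : ddist E w u₁ = 2 :=
        ddist_eq_two_aux hsc hdiam hwu₁ (hnoedge u₁ hu₁ w hwV₂).2
      have d2 : ddist E w u₂ = 2 :=
        ddist_eq_two_aux hsc hdiam hwu₂ (h2v₂.2 w hw)
      rcases hres with h | h | ⟨_, _, h⟩
      · exact hwu₁ h
      · exact hwu₂ h
      · exact h (d1.trans d2.symm)
  refine ⟨key, fun hres => ?_⟩
  obtain ⟨w, hw, hres'⟩ := hres u₁ (Or.inl hu₁) u₂ (Or.inr hu₂) hne12
  exact key w hw hres'
end

section
/- No directed co-graph G contains four distinct vertices u1, u2, w1, w2 such that (w1,u1), (w2,u1), (u1,u2) ∈ E(G) and (w1,u2), (w2,u2), (u2,u1) ∉ E(G). -/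
universe u

lemma edge_mem_aux {V : Type u} {S : Set V} {E : V → V → Prop}
    (hG : IsDicograph S E) : ∀ x y, E x y → x ∈ S ∧ y ∈ S := by
  induction hG with
  | single v => intro x y h; exact h.elim
  | @disjUnion S₁ S₂ E₁ E₂ h1 h2 hd ih1 ih2 =>
    intro x y h
    rcases h with h | h
    · exact ⟨Or.inl (ih1 x y h).1, Or.inl (ih1 x y h).2⟩
    · exact ⟨Or.inr (ih2 x y h).1, Or.inr (ih2 x y h).2⟩
  | @join S₁ S₂ E₁ E₂ h1 h2 hd ih1 ih2 =>
    intro x y h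
    rcases h with h | h | ⟨hx, hy⟩ | ⟨hx, hy⟩
    · exact ⟨Or.inl (ih1 x y h).1, Or.inl (ih1 x y h).2⟩
    · exact ⟨Or.inr (ih2 x y h).1, Or.inr (ih2 x y h).2⟩
    · exact ⟨Or.inl hx, Or.inr hy⟩
    · exact ⟨Or.inr hx, Or.inl hy⟩
  | @dirJoin S₁ S₂ E₁ E₂ h1 h2 hd ih1 ih2 =>
    intro x y h
    rcases h with h | h | ⟨hx, hy⟩
    · exact ⟨Or.inl (ih1 x y h).1, Or.inl (ih1 x y h).2⟩
    · exact ⟨Or.inr (ih2 x y h).1, Or.inr (ih2 x y h).2⟩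
    · exact ⟨Or.inl hx, Or.inr hy⟩

/-- No directed co-graph contains the four-vertex configuration of
Figure 5 (3.). -/
theorem stmt_9 {V : Type u} {S : Set V} {E : V → V → Prop}
    (hG : IsDicograph S E) :
    ¬ ∃ u₁ u₂ w₁ w₂ : V,
      u₁ ∈ S ∧ u₂ ∈ S ∧ w₁ ∈ S ∧ w₂ ∈ S ∧
      u₁ ≠ u₂ ∧ u₁ ≠ w₁ ∧ u₁ ≠ w₂ ∧ u₂ ≠ w₁ ∧ u₂ ≠ w₂ ∧ w₁ ≠ w₂ ∧
      E w₁ u₁ ∧ E w₂ u₁ ∧ E u₁ u₂ ∧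
      ¬ E w₁ u₂ ∧ ¬ E w₂ u₂ ∧ ¬ E u₂ u₁ := by
  induction hG with
  | single v =>
    rintro ⟨u₁, u₂, w₁, w₂, -, -, -, -, -, -, -, -, -, -, e1, -⟩
    exact e1
  | @disjUnion S₁ S₂ E₁ E₂ h1 h2 hd ih1 ih2 =>
    rintro ⟨u₁, u₂, w₁, w₂, hu₁, hu₂, hw₁, hw₂, n1, n2, n3, n4, n5, n6,
      e1, e2, e3, ne1, ne2, ne3⟩
    have m1 := edge_mem_aux h1
    have m2 := edge_mem_aux h2
    have d : ∀ x, x ∈ S₁ → x ∈ S₂ → False :=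
      fun x hx hx' => Set.disjoint_left.mp hd hx hx'
    simp only [not_or] at ne1 ne2 ne3
    rcases e1 with e1 | e1
    · -- w₁, u₁ ∈ S₁
      have hu1 : u₁ ∈ S₁ := (m1 _ _ e1).2
      have e3' : E₁ u₁ u₂ := by
        rcases e3 with e3 | e3
        · exact e3
        · exact absurd hu1 (fun h => d _ h (m2 _ _ e3).1)
      have e2' : E₁ w₂ u₁ := by
        rcases e2 with e2 | e2
        · exact e2
        · exact absurd hu1 (fun h => d _ h (m2 _ _ e2).2)
      exact ih1 ⟨u₁, u₂, w₁, w₂, hu1, (m1 _ _ e3').2, (m1 _ _ e1).1,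
        (m1 _ _ e2').1, n1, n2, n3, n4, n5, n6, e1, e2', e3', ne1.1, ne2.1, ne3.1⟩
    · -- w₁, u₁ ∈ S₂
      have hu1 : u₁ ∈ S₂ := (m2 _ _ e1).2
      have e3' : E₂ u₁ u₂ := by
        rcases e3 with e3 | e3
        · exact absurd hu1 (fun h => d _ (m1 _ _ e3).1 h)
        · exact e3
      have e2' : E₂ w₂ u₁ := by
        rcases e2 with e2 | e2
        · exact absurd hu1 (fun h => d _ (m1 _ _ e2).2 h)
        · exact e2
      exact ih2 ⟨u₁, u₂, w₁, w₂, hu1, (m2 _ _ e3').2, (m2 _ _ e1).1,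
        (m2 _ _ e2').1, n1, n2, n3, n4, n5, n6, e1, e2', e3', ne1.2, ne2.2, ne3.2⟩
  | @join S₁ S₂ E₁ E₂ h1 h2 hd ih1 ih2 =>
    rintro ⟨u₁, u₂, w₁, w₂, hu₁, hu₂, hw₁, hw₂, n1, n2, n3, n4, n5, n6,
      e1, e2, e3, ne1, ne2, ne3⟩
    have m1 := edge_mem_aux h1
    have m2 := edge_mem_aux h2
    have d : ∀ x, x ∈ S₁ → x ∈ S₂ → False :=
      fun x hx hx' => Set.disjoint_left.mp hd hx hx'
    simp only [not_or, not_and] at ne1 ne2 ne3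
    rcases hu₂ with h2a | h2b
    · -- u₂ ∈ S₁, then u₁, w₁, w₂ ∈ S₁
      have hu1 : u₁ ∈ S₁ := by
        rcases hu₁ with h | h
        · exact h
        · exact absurd h (ne3.2.2.1 h2a)
      have hw1 : w₁ ∈ S₁ := by
        rcases hw₁ with h | h
        · exact h
        · exact absurd h2a (ne1.2.2.2 h)
      have hw2 : w₂ ∈ S₁ := by
        rcases hw₂ with h | h
        · exact h
        · exact absurd h2a (ne2.2.2.2 h)
      have red : ∀ x y, x ∈ S₁ → y ∈ S₁ →
          (E₁ x y ∨ E₂ x y ∨ (x ∈ S₁ ∧ y ∈ S₂) ∨ (x ∈ S₂ ∧ y ∈ S₁)) → E₁ x y := by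
        rintro x y hx hy (h | h | ⟨-, h⟩ | ⟨h, -⟩)
        · exact h
        · exact absurd hx (fun _ => d _ hx (m2 _ _ h).1)
        · exact absurd hy (fun _ => d _ hy h)
        · exact absurd hx (fun _ => d _ hx h)
      exact ih1 ⟨u₁, u₂, w₁, w₂, hu1, h2a, hw1, hw2, n1, n2, n3, n4, n5, n6,
        red _ _ hw1 hu1 e1, red _ _ hw2 hu1 e2, red _ _ hu1 h2a e3,
        ne1.1, ne2.1, ne3.1⟩
    · -- u₂ ∈ S₂, then u₁, w₁, w₂ ∈ S₂
      have hu1 : u₁ ∈ S₂ := by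
        rcases hu₁ with h | h
        · exact absurd h (ne3.2.2.2 h2b)
        · exact h
      have hw1 : w₁ ∈ S₂ := by
        rcases hw₁ with h | h
        · exact absurd h2b (ne1.2.2.1 h)
        · exact h
      have hw2 : w₂ ∈ S₂ := by
        rcases hw₂ with h | h
        · exact absurd h2b (ne2.2.2.1 h)
        · exact h
      have red : ∀ x y, x ∈ S₂ → y ∈ S₂ →
          (E₁ x y ∨ E₂ x y ∨ (x ∈ S₁ ∧ y ∈ S₂) ∨ (x ∈ S₂ ∧ y ∈ S₁)) → E₂ x y := by
        rintro x y hx hy (h | h | ⟨h, -⟩ | ⟨-, h⟩)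
        · exact absurd hx (fun _ => d _ (m1 _ _ h).1 hx)
        · exact h
        · exact absurd hx (fun _ => d _ h hx)
        · exact absurd hy (fun _ => d _ h hy)
      exact ih2 ⟨u₁, u₂, w₁, w₂, hu1, h2b, hw1, hw2, n1, n2, n3, n4, n5, n6,
        red _ _ hw1 hu1 e1, red _ _ hw2 hu1 e2, red _ _ hu1 h2b e3,
        ne1.2.1, ne2.2.1, ne3.2.1⟩
  | @dirJoin S₁ S₂ E₁ E₂ h1 h2 hd ih1 ih2 =>
    rintro ⟨u₁, u₂, w₁, w₂, hu₁, hu₂, hw₁, hw₂, n1, n2, n3, n4, n5, n6,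
      e1, e2, e3, ne1, ne2, ne3⟩
    have m1 := edge_mem_aux h1
    have m2 := edge_mem_aux h2
    have d : ∀ x, x ∈ S₁ → x ∈ S₂ → False :=
      fun x hx hx' => Set.disjoint_left.mp hd hx hx'
    simp only [not_or, not_and] at ne1 ne2 ne3
    -- first: u₁ and u₂ are in the same part
    have same : (u₁ ∈ S₁ ∧ u₂ ∈ S₁ ∧ E₁ u₁ u₂) ∨ (u₁ ∈ S₂ ∧ u₂ ∈ S₂ ∧ E₂ u₁ u₂) := by
      rcases e3 with h | h | ⟨h1', h2'⟩
      · exact Or.inl ⟨(m1 _ _ h).1, (m1 _ _ h).2, h⟩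
      · exact Or.inr ⟨(m2 _ _ h).1, (m2 _ _ h).2, h⟩
      · -- u₁ ∈ S₁, u₂ ∈ S₂ : derive contradiction from E w₁ u₁, ¬E w₁ u₂
        exfalso
        rcases e1 with h | h | ⟨hw, hu⟩
        · exact ne1.2.2 (m1 _ _ h).1 h2'
        · exact d _ h1' (m2 _ _ h).2
        · exact ne1.2.2 hw h2'
    rcases same with ⟨hu1, hu2, e3'⟩ | ⟨hu1, hu2, e3'⟩
    · have hw1 : E₁ w₁ u₁ := by
        rcases e1 with h | h | ⟨hw, hu⟩
        · exact h
        · exact absurd hu1 (fun _ => d _ hu1 (m2 _ _ h).2)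
        · exact absurd hu1 (fun _ => d _ hu1 hu)
      have hw2 : E₁ w₂ u₁ := by
        rcases e2 with h | h | ⟨hw, hu⟩
        · exact h
        · exact absurd hu1 (fun _ => d _ hu1 (m2 _ _ h).2)
        · exact absurd hu1 (fun _ => d _ hu1 hu)
      exact ih1 ⟨u₁, u₂, w₁, w₂, hu1, hu2, (m1 _ _ hw1).1, (m1 _ _ hw2).1,
        n1, n2, n3, n4, n5, n6, hw1, hw2, e3', ne1.1, ne2.1, ne3.1⟩
    · have hw1 : E₂ w₁ u₁ := by
        rcases e1 with h | h | ⟨hw, hu⟩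
        · exact absurd hu1 (fun _ => d _ (m1 _ _ h).2 hu1)
        · exact h
        · exact absurd hu2 (fun _ => ne1.2.2 hw hu2)
      have hw2 : E₂ w₂ u₁ := by
        rcases e2 with h | h | ⟨hw, hu⟩
        · exact absurd hu1 (fun _ => d _ (m1 _ _ h).2 hu1)
        · exact h
        · exact absurd hu2 (fun _ => ne2.2.2 hw hu2)
      exact ih2 ⟨u₁, u₂, w₁, w₂, hu1, hu2, (m2 _ _ hw1).1, (m2 _ _ hw2).1,
        n1, n2, n3, n4, n5, n6, hw1, hw2, e3', ne1.2.1, ne2.2.1, ne3.2.1⟩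
end

section
/- No directed co-graph G contains five distinct vertices u1, v, u2, w1, w2 such that (w1,u1), (w2,u1), (w2,v), (v,u2) ∈ E(G) and (w1,u2), (w1,v), (w2,u2), (v,u1) ∉ E(G). -/
universe u

lemma IsDicograph.mem_of_edge {V : Type u} {S : Set V} {E : V → V → Prop}
    (h : IsDicograph S E) : ∀ a b, E a b → a ∈ S ∧ b ∈ S := by
  induction h with
  | single x => intro a b hab; exact hab.elim
  | @disjUnion S₁ S₂ E₁ E₂ h1 h2 hd ih1 ih2 =>
      rintro a b (h | h)
      · exact ⟨Or.inl (ih1 a b h).1, Or.inl (ih1 a b h).2⟩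
      · exact ⟨Or.inr (ih2 a b h).1, Or.inr (ih2 a b h).2⟩
  | @join S₁ S₂ E₁ E₂ h1 h2 hd ih1 ih2 =>
      rintro a b (h | h | ⟨ha, hb⟩ | ⟨ha, hb⟩)
      · exact ⟨Or.inl (ih1 a b h).1, Or.inl (ih1 a b h).2⟩
      · exact ⟨Or.inr (ih2 a b h).1, Or.inr (ih2 a b h).2⟩
      · exact ⟨Or.inl ha, Or.inr hb⟩
      · exact ⟨Or.inr ha, Or.inl hb⟩
  | @dirJoin S₁ S₂ E₁ E₂ h1 h2 hd ih1 ih2 =>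
      rintro a b (h | h | ⟨ha, hb⟩)
      · exact ⟨Or.inl (ih1 a b h).1, Or.inl (ih1 a b h).2⟩
      · exact ⟨Or.inr (ih2 a b h).1, Or.inr (ih2 a b h).2⟩
      · exact ⟨Or.inl ha, Or.inr hb⟩

/-- No directed co-graph contains the five-vertex configuration of
Figure 6. -/
theorem stmt_10 {V : Type u} {S : Set V} {E : V → V → Prop}
    (hG : IsDicograph S E) :
    ¬ ∃ u₁ v u₂ w₁ w₂ : V,
      u₁ ∈ S ∧ v ∈ S ∧ u₂ ∈ S ∧ w₁ ∈ S ∧ w₂ ∈ S ∧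
      u₁ ≠ v ∧ u₁ ≠ u₂ ∧ u₁ ≠ w₁ ∧ u₁ ≠ w₂ ∧
      v ≠ u₂ ∧ v ≠ w₁ ∧ v ≠ w₂ ∧
      u₂ ≠ w₁ ∧ u₂ ≠ w₂ ∧ w₁ ≠ w₂ ∧
      E w₁ u₁ ∧ E w₂ u₁ ∧ E w₂ v ∧ E v u₂ ∧
      ¬ E w₁ u₂ ∧ ¬ E w₁ v ∧ ¬ E w₂ u₂ ∧ ¬ E v u₁ := by
  induction hG with
  | single x =>
      rintro ⟨u₁, v, u₂, w₁, w₂, hu₁, hv, -, -, -, d1, -⟩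
      simp only [Set.mem_singleton_iff] at hu₁ hv
      exact d1 (hu₁.trans hv.symm)
  | @disjUnion S₁ S₂ E₁ E₂ h1 h2 hd ih1 ih2 =>
      rintro ⟨u₁, v, u₂, w₁, w₂, hu₁, hv, hu₂, hw₁, hw₂,
        d1, d2, d3, d4, d5, d6, d7, d8, d9, d10,
        e1, e2, e3, e4, n1, n2, n3, n4⟩
      have m1 := IsDicograph.mem_of_edge h1
      have m2 := IsDicograph.mem_of_edge h2
      have hdis : ∀ x, x ∈ S₁ → x ∈ S₂ → False :=
        fun x hx hx' => Set.disjoint_left.mp hd hx hx'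
      have s1 := e1.imp (m1 _ _) (m2 _ _)
      have s2 := e2.imp (m1 _ _) (m2 _ _)
      have s3 := e3.imp (m1 _ _) (m2 _ _)
      have s4 := e4.imp (m1 _ _) (m2 _ _)
      rcases s2 with ⟨hw₂', hu₁'⟩ | ⟨hw₂', hu₁'⟩
      · have hv' := (s3.resolve_right fun h => hdis w₂ hw₂' h.1).2
        have hu₂' := (s4.resolve_right fun h => hdis v hv' h.1).2
        have hw₁' := (s1.resolve_right fun h => hdis u₁ hu₁' h.2).1
        exact ih1 ⟨u₁, v, u₂, w₁, w₂, hu₁', hv', hu₂', hw₁', hw₂',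
          d1, d2, d3, d4, d5, d6, d7, d8, d9, d10,
          e1.resolve_right (fun h => hdis w₁ hw₁' (m2 _ _ h).1),
          e2.resolve_right (fun h => hdis w₂ hw₂' (m2 _ _ h).1),
          e3.resolve_right (fun h => hdis w₂ hw₂' (m2 _ _ h).1),
          e4.resolve_right (fun h => hdis v hv' (m2 _ _ h).1),
          fun h => n1 (Or.inl h), fun h => n2 (Or.inl h),
          fun h => n3 (Or.inl h), fun h => n4 (Or.inl h)⟩
      · have hv' := (s3.resolve_left fun h => hdis w₂ h.1 hw₂').2
        have hu₂' := (s4.resolve_left fun h => hdis v h.1 hv').2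
        have hw₁' := (s1.resolve_left fun h => hdis u₁ h.2 hu₁').1
        exact ih2 ⟨u₁, v, u₂, w₁, w₂, hu₁', hv', hu₂', hw₁', hw₂',
          d1, d2, d3, d4, d5, d6, d7, d8, d9, d10,
          e1.resolve_left (fun h => hdis w₁ (m1 _ _ h).1 hw₁'),
          e2.resolve_left (fun h => hdis w₂ (m1 _ _ h).1 hw₂'),
          e3.resolve_left (fun h => hdis w₂ (m1 _ _ h).1 hw₂'),
          e4.resolve_left (fun h => hdis v (m1 _ _ h).1 hv'),
          fun h => n1 (Or.inr h), fun h => n2 (Or.inr h),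
          fun h => n3 (Or.inr h), fun h => n4 (Or.inr h)⟩
  | @join S₁ S₂ E₁ E₂ h1 h2 hd ih1 ih2 =>
      rintro ⟨u₁, v, u₂, w₁, w₂, hu₁, hv, hu₂, hw₁, hw₂,
        d1, d2, d3, d4, d5, d6, d7, d8, d9, d10,
        e1, e2, e3, e4, n1, n2, n3, n4⟩
      have m1 := IsDicograph.mem_of_edge h1
      have m2 := IsDicograph.mem_of_edge h2
      have hdis : ∀ x, x ∈ S₁ → x ∈ S₂ → False :=
        fun x hx hx' => Set.disjoint_left.mp hd hx hx'
      have hu₁o : u₁ ∈ S₁ ∨ u₁ ∈ S₂ := hu₁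
      have hvo : v ∈ S₁ ∨ v ∈ S₂ := hv
      have hu₂o : u₂ ∈ S₁ ∨ u₂ ∈ S₂ := hu₂
      have hw₁o : w₁ ∈ S₁ ∨ w₁ ∈ S₂ := hw₁
      have hw₂o : w₂ ∈ S₁ ∨ w₂ ∈ S₂ := hw₂
      have t1a : ¬(w₁ ∈ S₁ ∧ u₂ ∈ S₂) := fun h => n1 (Or.inr (Or.inr (Or.inl h)))
      have t1b : ¬(w₁ ∈ S₂ ∧ u₂ ∈ S₁) := fun h => n1 (Or.inr (Or.inr (Or.inr h)))
      have t2a : ¬(w₁ ∈ S₁ ∧ v ∈ S₂) := fun h => n2 (Or.inr (Or.inr (Or.inl h)))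
      have t2b : ¬(w₁ ∈ S₂ ∧ v ∈ S₁) := fun h => n2 (Or.inr (Or.inr (Or.inr h)))
      have t3a : ¬(w₂ ∈ S₁ ∧ u₂ ∈ S₂) := fun h => n3 (Or.inr (Or.inr (Or.inl h)))
      have t3b : ¬(w₂ ∈ S₂ ∧ u₂ ∈ S₁) := fun h => n3 (Or.inr (Or.inr (Or.inr h)))
      have t4a : ¬(v ∈ S₁ ∧ u₁ ∈ S₂) := fun h => n4 (Or.inr (Or.inr (Or.inl h)))
      have t4b : ¬(v ∈ S₂ ∧ u₁ ∈ S₁) := fun h => n4 (Or.inr (Or.inr (Or.inr h)))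
      rcases hw₁o with hw₁' | hw₁'
      · have hv' : v ∈ S₁ := hvo.resolve_right fun h => t2a ⟨hw₁', h⟩
        have hu₂' : u₂ ∈ S₁ := hu₂o.resolve_right fun h => t1a ⟨hw₁', h⟩
        have hu₁' : u₁ ∈ S₁ := hu₁o.resolve_right fun h => t4a ⟨hv', h⟩
        have hw₂' : w₂ ∈ S₁ := hw₂o.resolve_right fun h => t3b ⟨h, hu₂'⟩
        have f1 : E₁ w₁ u₁ := by
          rcases e1 with h | h | ⟨ha, hb⟩ | ⟨ha, hb⟩
          · exact h
          · exact absurd (m2 _ _ h).1 fun h' => hdis w₁ hw₁' h'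
          · exact absurd hb fun h' => hdis u₁ hu₁' h'
          · exact absurd ha fun h' => hdis w₁ hw₁' h'
        have f2 : E₁ w₂ u₁ := by
          rcases e2 with h | h | ⟨ha, hb⟩ | ⟨ha, hb⟩
          · exact h
          · exact absurd (m2 _ _ h).1 fun h' => hdis w₂ hw₂' h'
          · exact absurd hb fun h' => hdis u₁ hu₁' h'
          · exact absurd ha fun h' => hdis w₂ hw₂' h'
        have f3 : E₁ w₂ v := by
          rcases e3 with h | h | ⟨ha, hb⟩ | ⟨ha, hb⟩
          · exact h
          · exact absurd (m2 _ _ h).1 fun h' => hdis w₂ hw₂' h'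
          · exact absurd hb fun h' => hdis v hv' h'
          · exact absurd ha fun h' => hdis w₂ hw₂' h'
        have f4 : E₁ v u₂ := by
          rcases e4 with h | h | ⟨ha, hb⟩ | ⟨ha, hb⟩
          · exact h
          · exact absurd (m2 _ _ h).1 fun h' => hdis v hv' h'
          · exact absurd hb fun h' => hdis u₂ hu₂' h'
          · exact absurd ha fun h' => hdis v hv' h'
        exact ih1 ⟨u₁, v, u₂, w₁, w₂, hu₁', hv', hu₂', hw₁', hw₂',
          d1, d2, d3, d4, d5, d6, d7, d8, d9, d10, f1, f2, f3, f4,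
          fun h => n1 (Or.inl h), fun h => n2 (Or.inl h),
          fun h => n3 (Or.inl h), fun h => n4 (Or.inl h)⟩
      · have hv' : v ∈ S₂ := hvo.resolve_left fun h => t2b ⟨hw₁', h⟩
        have hu₂' : u₂ ∈ S₂ := hu₂o.resolve_left fun h => t1b ⟨hw₁', h⟩
        have hu₁' : u₁ ∈ S₂ := hu₁o.resolve_left fun h => t4b ⟨hv', h⟩
        have hw₂' : w₂ ∈ S₂ := hw₂o.resolve_left fun h => t3a ⟨h, hu₂'⟩
        have f1 : E₂ w₁ u₁ := by
          rcases e1 with h | h | ⟨ha, hb⟩ | ⟨ha, hb⟩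
          · exact absurd (m1 _ _ h).1 fun h' => hdis w₁ h' hw₁'
          · exact h
          · exact absurd ha fun h' => hdis w₁ h' hw₁'
          · exact absurd hb fun h' => hdis u₁ h' hu₁'
        have f2 : E₂ w₂ u₁ := by
          rcases e2 with h | h | ⟨ha, hb⟩ | ⟨ha, hb⟩
          · exact absurd (m1 _ _ h).1 fun h' => hdis w₂ h' hw₂'
          · exact h
          · exact absurd ha fun h' => hdis w₂ h' hw₂'
          · exact absurd hb fun h' => hdis u₁ h' hu₁'
        have f3 : E₂ w₂ v := by
          rcases e3 with h | h | ⟨ha, hb⟩ | ⟨ha, hb⟩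
          · exact absurd (m1 _ _ h).1 fun h' => hdis w₂ h' hw₂'
          · exact h
          · exact absurd ha fun h' => hdis w₂ h' hw₂'
          · exact absurd hb fun h' => hdis v h' hv'
        have f4 : E₂ v u₂ := by
          rcases e4 with h | h | ⟨ha, hb⟩ | ⟨ha, hb⟩
          · exact absurd (m1 _ _ h).1 fun h' => hdis v h' hv'
          · exact h
          · exact absurd ha fun h' => hdis v h' hv'
          · exact absurd hb fun h' => hdis u₂ h' hu₂'
        exact ih2 ⟨u₁, v, u₂, w₁, w₂, hu₁', hv', hu₂', hw₁', hw₂',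
          d1, d2, d3, d4, d5, d6, d7, d8, d9, d10, f1, f2, f3, f4,
          fun h => n1 (Or.inr (Or.inl h)), fun h => n2 (Or.inr (Or.inl h)),
          fun h => n3 (Or.inr (Or.inl h)), fun h => n4 (Or.inr (Or.inl h))⟩
  | @dirJoin S₁ S₂ E₁ E₂ h1 h2 hd ih1 ih2 =>
      rintro ⟨u₁, v, u₂, w₁, w₂, hu₁, hv, hu₂, hw₁, hw₂,
        d1, d2, d3, d4, d5, d6, d7, d8, d9, d10,
        e1, e2, e3, e4, n1, n2, n3, n4⟩
      have m1 := IsDicograph.mem_of_edge h1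
      have m2 := IsDicograph.mem_of_edge h2
      have hdis : ∀ x, x ∈ S₁ → x ∈ S₂ → False :=
        fun x hx hx' => Set.disjoint_left.mp hd hx hx'
      have hu₁o : u₁ ∈ S₁ ∨ u₁ ∈ S₂ := hu₁
      have hvo : v ∈ S₁ ∨ v ∈ S₂ := hv
      have hu₂o : u₂ ∈ S₁ ∨ u₂ ∈ S₂ := hu₂
      have hw₁o : w₁ ∈ S₁ ∨ w₁ ∈ S₂ := hw₁
      have hw₂o : w₂ ∈ S₁ ∨ w₂ ∈ S₂ := hw₂
      -- edges forbid (S₂, S₁) cross pairs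
      have c1 : ¬(w₁ ∈ S₂ ∧ u₁ ∈ S₁) := by
        rintro ⟨ha, hb⟩
        rcases e1 with h | h | ⟨h1', h2'⟩
        · exact hdis w₁ (m1 _ _ h).1 ha
        · exact hdis u₁ hb (m2 _ _ h).2
        · exact hdis w₁ h1' ha
      have c2 : ¬(w₂ ∈ S₂ ∧ u₁ ∈ S₁) := by
        rintro ⟨ha, hb⟩
        rcases e2 with h | h | ⟨h1', h2'⟩
        · exact hdis w₂ (m1 _ _ h).1 ha
        · exact hdis u₁ hb (m2 _ _ h).2
        · exact hdis w₂ h1' ha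
      have c3 : ¬(w₂ ∈ S₂ ∧ v ∈ S₁) := by
        rintro ⟨ha, hb⟩
        rcases e3 with h | h | ⟨h1', h2'⟩
        · exact hdis w₂ (m1 _ _ h).1 ha
        · exact hdis v hb (m2 _ _ h).2
        · exact hdis w₂ h1' ha
      have c4 : ¬(v ∈ S₂ ∧ u₂ ∈ S₁) := by
        rintro ⟨ha, hb⟩
        rcases e4 with h | h | ⟨h1', h2'⟩
        · exact hdis v (m1 _ _ h).1 ha
        · exact hdis u₂ hb (m2 _ _ h).2
        · exact hdis v h1' ha
      -- non-edges forbid (S₁, S₂) cross pairs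
      have c5 : ¬(w₁ ∈ S₁ ∧ u₂ ∈ S₂) := fun h => n1 (Or.inr (Or.inr h))
      have c6 : ¬(w₁ ∈ S₁ ∧ v ∈ S₂) := fun h => n2 (Or.inr (Or.inr h))
      have c7 : ¬(w₂ ∈ S₁ ∧ u₂ ∈ S₂) := fun h => n3 (Or.inr (Or.inr h))
      have c8 : ¬(v ∈ S₁ ∧ u₁ ∈ S₂) := fun h => n4 (Or.inr (Or.inr h))
      rcases hw₁o with hw₁' | hw₁'
      · have hu₂' : u₂ ∈ S₁ := hu₂o.resolve_right fun h => c5 ⟨hw₁', h⟩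
        have hv' : v ∈ S₁ := hvo.resolve_right fun h => c6 ⟨hw₁', h⟩
        have hu₁' : u₁ ∈ S₁ := hu₁o.resolve_right fun h => c8 ⟨hv', h⟩
        have hw₂' : w₂ ∈ S₁ := hw₂o.resolve_right fun h => c2 ⟨h, hu₁'⟩
        have f1 : E₁ w₁ u₁ := by
          rcases e1 with h | h | ⟨ha, hb⟩
          · exact h
          · exact absurd (m2 _ _ h).1 fun h' => hdis w₁ hw₁' h'
          · exact absurd hb fun h' => hdis u₁ hu₁' h'
        have f2 : E₁ w₂ u₁ := by
          rcases e2 with h | h | ⟨ha, hb⟩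
          · exact h
          · exact absurd (m2 _ _ h).1 fun h' => hdis w₂ hw₂' h'
          · exact absurd hb fun h' => hdis u₁ hu₁' h'
        have f3 : E₁ w₂ v := by
          rcases e3 with h | h | ⟨ha, hb⟩
          · exact h
          · exact absurd (m2 _ _ h).1 fun h' => hdis w₂ hw₂' h'
          · exact absurd hb fun h' => hdis v hv' h'
        have f4 : E₁ v u₂ := by
          rcases e4 with h | h | ⟨ha, hb⟩
          · exact h
          · exact absurd (m2 _ _ h).1 fun h' => hdis v hv' h'
          · exact absurd hb fun h' => hdis u₂ hu₂' h'
        exact ih1 ⟨u₁, v, u₂, w₁, w₂, hu₁', hv', hu₂', hw₁', hw₂',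
          d1, d2, d3, d4, d5, d6, d7, d8, d9, d10, f1, f2, f3, f4,
          fun h => n1 (Or.inl h), fun h => n2 (Or.inl h),
          fun h => n3 (Or.inl h), fun h => n4 (Or.inl h)⟩
      · have hu₁' : u₁ ∈ S₂ := hu₁o.resolve_left fun h => c1 ⟨hw₁', h⟩
        have hv' : v ∈ S₂ := hvo.resolve_left fun h => c8 ⟨h, hu₁'⟩
        have hu₂' : u₂ ∈ S₂ := hu₂o.resolve_left fun h => c4 ⟨hv', h⟩
        have hw₂' : w₂ ∈ S₂ := hw₂o.resolve_left fun h => c7 ⟨h, hu₂'⟩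
        have f1 : E₂ w₁ u₁ := by
          rcases e1 with h | h | ⟨ha, hb⟩
          · exact absurd (m1 _ _ h).1 fun h' => hdis w₁ h' hw₁'
          · exact h
          · exact absurd ha fun h' => hdis w₁ h' hw₁'
        have f2 : E₂ w₂ u₁ := by
          rcases e2 with h | h | ⟨ha, hb⟩
          · exact absurd (m1 _ _ h).1 fun h' => hdis w₂ h' hw₂'
          · exact h
          · exact absurd ha fun h' => hdis w₂ h' hw₂'
        have f3 : E₂ w₂ v := by
          rcases e3 with h | h | ⟨ha, hb⟩
          · exact absurd (m1 _ _ h).1 fun h' => hdis w₂ h' hw₂'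
          · exact h
          · exact absurd ha fun h' => hdis w₂ h' hw₂'
        have f4 : E₂ v u₂ := by
          rcases e4 with h | h | ⟨ha, hb⟩
          · exact absurd (m1 _ _ h).1 fun h' => hdis v h' hv'
          · exact h
          · exact absurd ha fun h' => hdis v h' hv'
        exact ih2 ⟨u₁, v, u₂, w₁, w₂, hu₁', hv', hu₂', hw₁', hw₂',
          d1, d2, d3, d4, d5, d6, d7, d8, d9, d10, f1, f2, f3, f4,
          fun h => n1 (Or.inr (Or.inl h)), fun h => n2 (Or.inr (Or.inl h)),
          fun h => n3 (Or.inr (Or.inl h)), fun h => n4 (Or.inr (Or.inl h))⟩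
end

section
/- Let G be a strongly connected directed graph with all distances between distinct vertices at most 2 and let R be a resolving set for G. If u1 is a 1-vertex w.r.t. R, u2 is a 2-vertex w.r.t. R, and (u1,u2) ∈ E(G), then G has neither a 1-vertex nor a 2-vertex w.r.t. R ∪ {u1}. Symmetrically, if (u2,u1) ∉ E(G), then G has neither a 1-vertex nor a 2-vertex w.r.t. R ∪ {u2}. -/
universe u

lemma hwl_zero {V : Type u} {E : V → V → Prop} {w u : V}
    (h : HasWalkLen E w u 0) : w = u := by
  obtain ⟨f, h0, h1, _⟩ := h
  rw [← h0, ← h1]; rfl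

lemma hwl_one {V : Type u} {E : V → V → Prop} {w u : V}
    (h : HasWalkLen E w u 1) : E w u := by
  obtain ⟨f, h0, h1, he⟩ := h
  have := he 0
  have e0 : (0 : Fin 1).castSucc = (0 : Fin 2) := rfl
  have e1 : (0 : Fin 1).succ = Fin.last 1 := rfl
  rw [e0, e1, h0, h1] at this
  exact this

lemma ddist_one {V : Type u} {E : V → V → Prop} {w u : V}
    (hne : w ≠ u) (he : E w u) : ddist E w u = 1 := by
  have h1 : HasWalkLen E w u 1 :=
    ⟨![w, u], rfl, rfl, fun i => by fin_cases i; simpa⟩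
  have hmem : ddist E w u ∈ {n | HasWalkLen E w u n} := Nat.sInf_mem ⟨1, h1⟩
  have h0 : ddist E w u ≠ 0 := fun h => hne (hwl_zero (h ▸ hmem))
  have hle : ddist E w u ≤ 1 := Nat.sInf_le h1
  omega

lemma ddist_two {V : Type u} {E : V → V → Prop} {w u : V}
    (hne : w ≠ u) (he : ¬ E w u) (hr : Reaches E w u)
    (hle : ddist E w u ≤ 2) : ddist E w u = 2 := by
  have hmem : ddist E w u ∈ {n | HasWalkLen E w u n} := Nat.sInf_mem hr
  have h0 : ddist E w u ≠ 0 := fun h => hne (hwl_zero (h ▸ hmem))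
  have h1 : ddist E w u ≠ 1 := fun h => he (hwl_one (h ▸ hmem))
  omega

lemma one_unique {V : Type u} {E : V → V → Prop} {R : Set V}
    (hR : ResolvesSet E R Set.univ) {a b : V}
    (ha : OneVertex E R a) (hb : OneVertex E R b) : a = b := by
  by_contra hab
  obtain ⟨w, hw, hres⟩ := hR a trivial b trivial hab
  rcases hres with rfl | rfl | ⟨_, _, hd⟩
  · exact ha.1 hw
  · exact hb.1 hw
  · exact hd (by
      rw [ddist_one (fun h : w = a => ha.1 (h ▸ hw)) (ha.2 w hw),
        ddist_one (fun h : w = b => hb.1 (h ▸ hw)) (hb.2 w hw)])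

lemma two_unique {V : Type u} {E : V → V → Prop} {R : Set V}
    (hsc : SConn E Set.univ)
    (hdiam : ∀ u v : V, u ≠ v → ddist E u v ≤ 2)
    (hR : ResolvesSet E R Set.univ) {a b : V}
    (ha : TwoVertex E R a) (hb : TwoVertex E R b) : a = b := by
  by_contra hab
  obtain ⟨w, hw, hres⟩ := hR a trivial b trivial hab
  rcases hres with rfl | rfl | ⟨_, _, hd⟩
  · exact ha.1 hw
  · exact hb.1 hw
  · have hwa : w ≠ a := fun h => ha.1 (h ▸ hw)
    have hwb : w ≠ b := fun h => hb.1 (h ▸ hw)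
    exact hd (by
      rw [ddist_two hwa (ha.2 w hw) (hsc w trivial a trivial) (hdiam w a hwa),
        ddist_two hwb (hb.2 w hw) (hsc w trivial b trivial) (hdiam w b hwb)])

/-- Double removers: if `u₁` is a 1-vertex, `u₂` a 2-vertex w.r.t. a resolving
set `R`, and `(u₁,u₂) ∈ E(G)`, then `R ∪ {u₁}` admits neither a 1-vertex nor a
2-vertex; symmetrically for `(u₂,u₁) ∉ E(G)` and `R ∪ {u₂}`. -/
theorem stmt_17 {V : Type u} {E : V → V → Prop}
    (hsc : SConn E Set.univ)
    (hdiam : ∀ u v : V, u ≠ v → ddist E u v ≤ 2)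
    {R : Set V} (hR : ResolvesSet E R Set.univ)
    {u₁ u₂ : V} (h1v : OneVertex E R u₁) (h2v : TwoVertex E R u₂) :
    (E u₁ u₂ →
      (∀ v : V, ¬ OneVertex E (R ∪ {u₁}) v) ∧
      (∀ v : V, ¬ TwoVertex E (R ∪ {u₁}) v)) ∧
    (¬ E u₂ u₁ →
      (∀ v : V, ¬ OneVertex E (R ∪ {u₂}) v) ∧
      (∀ v : V, ¬ TwoVertex E (R ∪ {u₂}) v)) := by
  constructor
  · intro h12
    constructor
    · rintro v ⟨hvR, hv⟩
      have hv1 : OneVertex E R v :=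
        ⟨fun h => hvR (Or.inl h), fun w hw => hv w (Or.inl hw)⟩
      exact hvR (Set.mem_union_right _
        (Set.mem_singleton_iff.mpr (one_unique hR hv1 h1v)))
    · rintro v ⟨hvR, hv⟩
      have hv2 : TwoVertex E R v :=
        ⟨fun h => hvR (Or.inl h), fun w hw => hv w (Or.inl hw)⟩
      have hvu2 : v = u₂ := two_unique hsc hdiam hR hv2 h2v
      exact hv u₁ (Set.mem_union_right _ rfl) (by rw [hvu2]; exact h12)
  · intro h21
    constructor
    · rintro v ⟨hvR, hv⟩
      have hv1 : OneVertex E R v :=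
        ⟨fun h => hvR (Or.inl h), fun w hw => hv w (Or.inl hw)⟩
      have hvu1 : v = u₁ := one_unique hR hv1 h1v
      exact h21 (by rw [← hvu1]; exact hv u₂ (Set.mem_union_right _ rfl))
    · rintro v ⟨hvR, hv⟩
      have hv2 : TwoVertex E R v :=
        ⟨fun h => hvR (Or.inl h), fun w hw => hv w (Or.inl hw)⟩
      exact hvR (Set.mem_union_right _
        (Set.mem_singleton_iff.mpr (two_unique hsc hdiam hR hv2 h2v)))
end
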